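/- Let $d \geq 2$, $k \geq 2$ be integers and define the function $m_k: [-\pi, \pi) \to \mathbb{Z}_{\geq 0}$ (for $d = 2$) by: $m_k(\omega) = 1$ on $[-\pi, \frac{-(2^k-2)\pi}{2^k-1})$, $m_k(\omega) = 0$ on $[\frac{-(2^k-2)\pi}{2^k-1}, \frac{-2^{k-1}\pi}{2^k-1})$, $m_k(\omega) = k - j$ on $[\frac{-2^j\pi}{2^k-1}, \frac{-2^{j-1}\pi}{2^k-1})$ for $j = 2,\dots,k-1$, $m_k(\omega) = k-1$ on $[\frac{-2\pi}{2^k-1}, \frac{2\pi}{2^k-1})$, $m_k(\omega) = k-j$ on $[\frac{2^{j-1}\pi}{2^k-1}, \frac{2^j\pi}{2^k-1})$ for $j = 2,\dots,k-1$, $m_k(\omega) = 0$ on $[\frac{2^{k-1}\pi}{2^k-1}, \frac{(2^k-2)\pi}{2^k-1})$, and $m_k(\omega) = 1$ on $[\frac{(2^k-2)\pi}{2^k-1}, \pi)$. Extend $m_k$ to $\mathbb{R}$ by $2\pi$-periodicity. Then $m_k$ satisfies the consistency equation $m_k(\omega) + 1 = m_k(\omega/2) + m_k(\omega/2 + \pi)$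 for all $\omega \in [-\pi, \pi)$. -/
import Mathlib

private lemma two_pow_mono {a b : ℕ} (h : a ≤ b) : (2:ℝ)^a ≤ (2:ℝ)^b :=
  pow_le_pow_right₀ (by norm_num) h

private lemma one_le_two_pow (a : ℕ) : (1:ℝ) ≤ (2:ℝ)^a := by
  simpa using two_pow_mono (Nat.zero_le a)

private lemma dyadic_pos (c : ℝ) (hc : 0 < c) :
    ∀ n : ℕ, 2 ≤ n → ∀ x : ℝ, 2*c ≤ x → x < 2^n * c →
    ∃ j : ℕ, 2 ≤ j ∧ j ≤ n ∧ (2:ℝ)^(j-1)*c ≤ x ∧ x < (2:ℝ)^j * c := by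
  intro n
  induction n with
  | zero => intro h; exact absurd h (by norm_num)
  | succ n ih =>
    intro _ x hx1 hx2
    by_cases hn : 2 ≤ n
    · rcases lt_or_ge x ((2:ℝ)^n * c) with h | h
      · obtain ⟨j, a, b, d, e⟩ := ih hn x hx1 h
        exact ⟨j, a, by omega, d, e⟩
      · exact ⟨n+1, by omega, le_rfl, h, hx2⟩
    · have hn1 : n = 1 := by omega
      subst hn1
      refine ⟨2, le_rfl, le_rfl, ?_, hx2⟩
      simpa using hx1

private lemma dyadic_neg (c : ℝ) (hc : 0 < c) :
    ∀ n : ℕ, 2 ≤ n → ∀ x : ℝ, 2*c < x → x ≤ 2^n * c →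
    ∃ j : ℕ, 2 ≤ j ∧ j ≤ n ∧ (2:ℝ)^(j-1)*c < x ∧ x ≤ (2:ℝ)^j * c := by
  intro n
  induction n with
  | zero => intro h; exact absurd h (by norm_num)
  | succ n ih =>
    intro _ x hx1 hx2
    by_cases hn : 2 ≤ n
    · rcases le_or_gt x ((2:ℝ)^n * c) with h | h
      · obtain ⟨j, a, b, d, e⟩ := ih hn x hx1 h
        exact ⟨j, a, by omega, d, e⟩
      · exact ⟨n+1, by omega, le_rfl, h, hx2⟩
    · have hn1 : n = 1 := by omega
      subst hn1
      refine ⟨2, le_rfl, le_rfl, ?_, hx2⟩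
      simpa using hx1

/-- Baggett's multiplicity functions `m_k` for dilation `d = 2` satisfy the
consistency equation `m(ω) + 1 = m(ω/2) + m(ω/2 + π)` on `[-π, π)`. -/
theorem consistency_equation_dilation_two (k : ℕ) (hk : 2 ≤ k) (m : ℝ → ℤ)
    (hper : Function.Periodic m (2 * Real.pi))
    (h1 : ∀ ω : ℝ, -Real.pi ≤ ω → ω < -(((2:ℝ)^k - 2) * Real.pi) / ((2:ℝ)^k - 1) → m ω = 1)
    (h2 : ∀ ω : ℝ, -(((2:ℝ)^k - 2) * Real.pi) / ((2:ℝ)^k - 1) ≤ ω →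
      ω < -((2:ℝ)^(k-1) * Real.pi) / ((2:ℝ)^k - 1) → m ω = 0)
    (h3 : ∀ j : ℕ, 2 ≤ j → j ≤ k - 1 → ∀ ω : ℝ,
      -((2:ℝ)^j * Real.pi) / ((2:ℝ)^k - 1) ≤ ω →
      ω < -((2:ℝ)^(j-1) * Real.pi) / ((2:ℝ)^k - 1) → m ω = (k : ℤ) - j)
    (h4 : ∀ ω : ℝ, -(2 * Real.pi) / ((2:ℝ)^k - 1) ≤ ω →
      ω < (2 * Real.pi) / ((2:ℝ)^k - 1) → m ω = (k : ℤ) - 1)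
    (h5 : ∀ j : ℕ, 2 ≤ j → j ≤ k - 1 → ∀ ω : ℝ,
      ((2:ℝ)^(j-1) * Real.pi) / ((2:ℝ)^k - 1) ≤ ω →
      ω < ((2:ℝ)^j * Real.pi) / ((2:ℝ)^k - 1) → m ω = (k : ℤ) - j)
    (h6 : ∀ ω : ℝ, ((2:ℝ)^(k-1) * Real.pi) / ((2:ℝ)^k - 1) ≤ ω →
      ω < (((2:ℝ)^k - 2) * Real.pi) / ((2:ℝ)^k - 1) → m ω = 0)
    (h7 : ∀ ω : ℝ, (((2:ℝ)^k - 2) * Real.pi) / ((2:ℝ)^k - 1) ≤ ω → ω < Real.pi → m ω = 1) :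
    ∀ ω : ℝ, -Real.pi ≤ ω → ω < Real.pi →
      m ω + 1 = m (ω / 2) + m (ω / 2 + Real.pi) := by
  intro ω hω1 hω2
  have hπ := Real.pi_pos
  have hper' : ∀ x : ℝ, m (x + Real.pi) = m (x - Real.pi) := by
    intro x
    have h := hper (x - Real.pi)
    rw [show x - Real.pi + 2*Real.pi = x + Real.pi from by ring] at h
    exact h
  by_cases hk2 : k = 2
  · -- special case k = 2 : m ≡ 1 on [-π, π)
    subst hk2
    have key : ∀ x : ℝ, -Real.pi ≤ x → x < Real.pi → m x = 1 := by
      intro x hx1 hx2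
      rcases lt_or_ge x (-(((2:ℝ)^2 - 2) * Real.pi) / ((2:ℝ)^2 - 1)) with h | h
      · exact h1 x hx1 h
      rcases lt_or_ge x ((2 * Real.pi) / ((2:ℝ)^2 - 1)) with h' | h'
      · have hm := h4 x (by norm_num at h ⊢; linarith) h'
        rw [hm]; norm_num
      · exact h7 x (by norm_num at h' ⊢; linarith) hx2
    rcases le_or_gt 0 ω with h0 | h0
    · rw [key ω hω1 hω2, key (ω/2) (by linarith) (by linarith), hper',
        key (ω/2 - Real.pi) (by linarith) (by linarith)]
    · rw [key ω hω1 hω2, key (ω/2) (by linarith) (by linarith),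
        key (ω/2 + Real.pi) (by linarith) (by linarith)]
  -- general case k ≥ 3
  have hk3 : 3 ≤ k := by omega
  have hD : (0:ℝ) < (2:ℝ)^k - 1 := by
    have := one_le_two_pow k; nlinarith [two_pow_mono (show 2 ≤ k from hk), (by norm_num : (2:ℝ)^2 = 4)]
  set c : ℝ := Real.pi / ((2:ℝ)^k - 1) with hcdef
  have hc : 0 < c := div_pos hπ hD
  have hπc : Real.pi = ((2:ℝ)^k - 1) * c := by
    rw [hcdef]; field_simp
  have hdiv : ∀ a : ℝ, a * Real.pi / ((2:ℝ)^k - 1) = a * c := by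
    intro a; rw [hcdef]; exact mul_div_assoc a _ _
  have hndiv : ∀ a : ℝ, -(a * Real.pi) / ((2:ℝ)^k - 1) = -(a * c) := by
    intro a; rw [neg_div, hdiv]
  set Q : ℝ := (2:ℝ)^(k-2) with hQdef
  have hQ2 : (2:ℝ) ≤ Q := by
    rw [hQdef]; simpa using two_pow_mono (show 1 ≤ k-2 by omega)
  have eQ1 : (2:ℝ)^(k-1) = 2*Q := by
    have h : (2:ℝ)^(k-2) * 2^1 = 2^(k-1) := by rw [← pow_add]; congr 1; omega
    rw [hQdef, ← h]; ring
  have eQ0 : (2:ℝ)^(k-1-1) = Q := by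
    rw [hQdef, show k-1-1 = k-2 from by omega]
  have e2k : (2:ℝ)^k = 4*Q := by
    have h : (2:ℝ)^(k-2) * 2^2 = 2^k := by rw [← pow_add]; congr 1; omega
    rw [hQdef, ← h]; ring
  have e4Q : Real.pi = (4*Q - 1) * c := by rw [hπc, e2k]
  have q1 : 2*c ≤ Q*c := mul_le_mul_of_nonneg_right hQ2 hc.le
  -- restated hypotheses
  have H1 : ∀ x : ℝ, -((4*Q-1)*c) ≤ x → x < -((4*Q-2)*c) → m x = 1 := by
    intro x hx1 hx2
    refine h1 x (by rw [e4Q]; exact hx1) ?_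
    rw [hndiv, e2k]; exact hx2
  have H2 : ∀ x : ℝ, -((4*Q-2)*c) ≤ x → x < -(2*Q*c) → m x = 0 := by
    intro x hx1 hx2
    refine h2 x (by rw [hndiv, e2k]; exact hx1) ?_
    rw [hndiv, eQ1]; exact hx2
  have H3 : ∀ j : ℕ, 2 ≤ j → j ≤ k-1 → ∀ x : ℝ, -((2:ℝ)^j*c) ≤ x →
      x < -((2:ℝ)^(j-1)*c) → m x = (k:ℤ) - j := by
    intro j hj1 hj2 x hx1 hx2
    exact h3 j hj1 hj2 x (by rw [hndiv]; exact hx1) (by rw [hndiv]; exact hx2)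
  have H4 : ∀ x : ℝ, -(2*c) ≤ x → x < 2*c → m x = (k:ℤ) - 1 := by
    intro x hx1 hx2
    exact h4 x (by rw [hndiv]; exact hx1) (by rw [hdiv]; exact hx2)
  have H5 : ∀ j : ℕ, 2 ≤ j → j ≤ k-1 → ∀ x : ℝ, (2:ℝ)^(j-1)*c ≤ x →
      x < (2:ℝ)^j*c → m x = (k:ℤ) - j := by
    intro j hj1 hj2 x hx1 hx2
    exact h5 j hj1 hj2 x (by rw [hdiv]; exact hx1) (by rw [hdiv]; exact hx2)
  have H6 : ∀ x : ℝ, 2*Q*c ≤ x → x < (4*Q-2)*c → m x = 0 := by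
    intro x hx1 hx2
    refine h6 x (by rw [hdiv, eQ1]; exact hx1) ?_
    rw [hdiv, e2k]; exact hx2
  have H7 : ∀ x : ℝ, (4*Q-2)*c ≤ x → x < (4*Q-1)*c → m x = 1 := by
    intro x hx1 hx2
    refine h7 x (by rw [hdiv, e2k]; exact hx1) (by rw [e4Q]; exact hx2)
  rw [e4Q] at hω1 hω2
  rcases lt_or_ge ω (-((4*Q-2)*c)) with hA | hA
  · -- Case A4: ω ∈ [-(4Q-1)c, -(4Q-2)c)
    have m1 : m ω = 1 := H1 ω hω1 hA
    have m2 := H3 (k-1) (by omega) le_rfl (ω/2)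
      (by rw [eQ1]; linarith [hc.le]) (by rw [eQ0]; linarith [q1, hc.le])
    have m3 := H5 (k-1) (by omega) le_rfl (ω/2 + Real.pi)
      (by rw [eQ0, e4Q]; linarith [q1, hc.le]) (by rw [eQ1, e4Q]; linarith)
    rw [m1, m2, m3]; omega
  rcases lt_or_ge ω (-(2*Q*c)) with hB | hB
  · -- Case A3: ω ∈ [-(4Q-2)c, -2Qc)
    have m1 : m ω = 0 := H2 ω hA hB
    have m2 := H3 (k-1) (by omega) le_rfl (ω/2)
      (by rw [eQ1]; linarith [hc.le]) (by rw [eQ0]; linarith)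
    have m3 : m (ω/2 + Real.pi) = 0 := H6 (ω/2 + Real.pi)
      (by rw [e4Q]; linarith) (by rw [e4Q]; linarith [q1, hc.le])
    rw [m1, m2, m3]; omega
  rcases lt_or_ge ω (-(2*c)) with hC | hC
  · -- Case A2: ω ∈ [-2Qc, -2c), dyadic decomposition
    obtain ⟨j, hj2, hjk, hja, hjb⟩ :=
      dyadic_neg c hc (k-1) (by omega) (-ω) (by linarith) (by rw [eQ1]; linarith)
    obtain ⟨i, rfl⟩ : ∃ i, j = i + 2 := ⟨j - 2, by omega⟩
    set p : ℝ := (2:ℝ)^i with hpdef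
    have hp1 : (1:ℝ) ≤ p := by rw [hpdef]; exact one_le_two_pow i
    have e1 : (2:ℝ)^(i+1) = 2*p := by rw [pow_succ, hpdef]; ring
    have e2 : (2:ℝ)^(i+2) = 4*p := by rw [pow_succ, pow_succ, hpdef]; ring
    have hja' : 2*p*c < -ω := by
      have h := hja; rw [show i+2-1 = i+1 from rfl, e1] at h; exact h
    have hjb' : -ω ≤ 4*p*c := by rw [e2] at hjb; exact hjb
    have hpQ : 2*p ≤ Q := by
      have h := two_pow_mono hjk
      rw [e2, eQ1] at h; linarith
    have q2 : 1*c ≤ p*c := mul_le_mul_of_nonneg_right hp1 hc.le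
    have q3 : (2*p)*c ≤ Q*c := mul_le_mul_of_nonneg_right hpQ hc.le
    have m1 : m ω = (k:ℤ) - (i+2 : ℕ) :=
      H3 (i+2) (by omega) hjk ω (by rw [e2]; linarith)
        (by show ω < -((2:ℝ)^(i+1)*c); rw [e1]; linarith)
    have m3 : m (ω/2 + Real.pi) = 0 := H6 (ω/2 + Real.pi)
      (by rw [e4Q]; linarith [q3, q1, hc.le]) (by rw [e4Q]; linarith [q2])
    by_cases hi : i = 0
    · subst hi
      have hp : p = 1 := by rw [hpdef]; norm_num
      rw [hp] at hja' hjb'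
      have m2 : m (ω/2) = (k:ℤ) - 1 :=
        H4 (ω/2) (by linarith) (by linarith [hc.le])
      rw [m1, m2, m3]; omega
    · have m2 : m (ω/2) = (k:ℤ) - (i+1 : ℕ) :=
        H3 (i+1) (by omega) (by omega) (ω/2)
          (by rw [e1]; linarith)
          (by show ω/2 < -((2:ℝ)^i*c); rw [← hpdef]; linarith)
      rw [m1, m2, m3]; omega
  rcases lt_or_ge ω 0 with hD0 | hD0
  · -- Case A1: ω ∈ [-2c, 0)
    have m1 : m ω = (k:ℤ) - 1 := H4 ω hC (by linarith)
    have m2 : m (ω/2) = (k:ℤ) - 1 := H4 (ω/2) (by linarith) (by linarith)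
    have m3 : m (ω/2 + Real.pi) = 1 := H7 (ω/2 + Real.pi)
      (by rw [e4Q]; linarith) (by rw [e4Q]; linarith)
    rw [m1, m2, m3]
  rcases lt_or_ge ω (2*c) with hE | hE
  · -- Case B1: ω ∈ [0, 2c)
    have m1 : m ω = (k:ℤ) - 1 := H4 ω (by linarith) hE
    have m2 : m (ω/2) = (k:ℤ) - 1 := H4 (ω/2) (by linarith) (by linarith)
    have m3 : m (ω/2 - Real.pi) = 1 := H1 (ω/2 - Real.pi)
      (by rw [e4Q]; linarith) (by rw [e4Q]; linarith)
    rw [m1, m2, hper', m3]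
  rcases lt_or_ge ω (2*Q*c) with hF | hF
  · -- Case B2: ω ∈ [2c, 2Qc), dyadic decomposition
    obtain ⟨j, hj2, hjk, hja, hjb⟩ :=
      dyadic_pos c hc (k-1) (by omega) ω hE (by rw [eQ1]; exact hF)
    obtain ⟨i, rfl⟩ : ∃ i, j = i + 2 := ⟨j - 2, by omega⟩
    set p : ℝ := (2:ℝ)^i with hpdef
    have hp1 : (1:ℝ) ≤ p := by rw [hpdef]; exact one_le_two_pow i
    have e1 : (2:ℝ)^(i+1) = 2*p := by rw [pow_succ, hpdef]; ring
    have e2 : (2:ℝ)^(i+2) = 4*p := by rw [pow_succ, pow_succ, hpdef]; ring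
    have hja' : 2*p*c ≤ ω := by
      have h := hja; rw [show i+2-1 = i+1 from rfl, e1] at h; exact h
    have hjb' : ω < 4*p*c := by rw [e2] at hjb; exact hjb
    have hpQ : 2*p ≤ Q := by
      have h := two_pow_mono hjk
      rw [e2, eQ1] at h; linarith
    have q2 : 1*c ≤ p*c := mul_le_mul_of_nonneg_right hp1 hc.le
    have q3 : (2*p)*c ≤ Q*c := mul_le_mul_of_nonneg_right hpQ hc.le
    have m1 : m ω = (k:ℤ) - (i+2 : ℕ) := H5 (i+2) (by omega) hjk ω hja hjb
    have m3 : m (ω/2 - Real.pi) = 0 := H2 (ω/2 - Real.pi)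
      (by rw [e4Q]; linarith [q2]) (by rw [e4Q]; linarith [q3, q1, hc.le])
    by_cases hi : i = 0
    · subst hi
      have hp : p = 1 := by rw [hpdef]; norm_num
      rw [hp] at hja' hjb'
      have m2 : m (ω/2) = (k:ℤ) - 1 :=
        H4 (ω/2) (by linarith [hc.le]) (by linarith)
      rw [m1, m2, hper', m3]; omega
    · have m2 : m (ω/2) = (k:ℤ) - (i+1 : ℕ) :=
        H5 (i+1) (by omega) (by omega) (ω/2)
          (by show (2:ℝ)^i*c ≤ ω/2; rw [← hpdef]; linarith)
          (by rw [e1]; linarith)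
      rw [m1, m2, hper', m3]; omega
  rcases lt_or_ge ω ((4*Q-2)*c) with hG | hG
  · -- Case B3: ω ∈ [2Qc, (4Q-2)c)
    have m1 : m ω = 0 := H6 ω hF hG
    have m2 := H5 (k-1) (by omega) le_rfl (ω/2)
      (by rw [eQ0]; linarith) (by rw [eQ1]; linarith [hc.le])
    have m3 : m (ω/2 - Real.pi) = 0 := H2 (ω/2 - Real.pi)
      (by rw [e4Q]; linarith [q1, hc.le]) (by rw [e4Q]; linarith)
    rw [m1, m2, hper', m3]; omega
  · -- Case B4: ω ∈ [(4Q-2)c, (4Q-1)c)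
    have m1 : m ω = 1 := H7 ω hG hω2
    have m2 := H5 (k-1) (by omega) le_rfl (ω/2)
      (by rw [eQ0]; linarith [q1, hc.le]) (by rw [eQ1]; linarith [hc.le])
    have m3 := H3 (k-1) (by omega) le_rfl (ω/2 - Real.pi)
      (by rw [eQ1, e4Q]; linarith) (by rw [eQ0, e4Q]; linarith [q1, hc.le])
    rw [m1, m2, hper', m3]; omega
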